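/- Exactness of the level-ℓ truncated anchored-ANOVA expansion for functions of effective dimension at most ℓ: suppose u = Σ_{i=1}^{n} v_i, where each v_i : Γ → V depends only on the coordinates in a set J_i ⊆ {1,…,M} with |J_i| ≤ ℓ (i.e., v_i(ξ) = v_i(ξ′) whenever ξ_m = ξ′_m for all m ∈ J_i). Then for every ξ ∈ Γ, Σ_{K ⊆ {1,…,M}, |K| ≤ ℓ} u_K(ξ) = u(ξ), where u_K(ξ) = Σ_{S ⊆ K} (−1)^{|K|−|S|} (P_S u)(ξ). -/

import Mathlib

open Finset

private lemma neg_one_pow_sub' {a b : ℕ} (h : b ≤ a) :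
    ((-1 : ℤ)) ^ (a - b) = (-1) ^ (a + b) := by
  have : a + b = (a - b) + 2 * b := by omega
  rw [this, pow_add, pow_mul]
  simp

theorem anchored_anova_truncation_exact_of_effective_dim_le
    {M ℓ : ℕ} (hℓ : ℓ ≤ M) {Γ : Fin M → Type*} [∀ m, Nonempty (Γ m)]
    {V : Type*} [AddCommGroup V]
    (u : (∀ m, Γ m) → V) (c : ∀ m, Γ m)
    {n : ℕ} (v : Fin n → (∀ m, Γ m) → V) (J : Fin n → Finset (Fin M))
    (hJ : ∀ i, (J i).card ≤ ℓ)
    (hv : ∀ i (ξ ξ' : ∀ m, Γ m), (∀ m ∈ J i, ξ m = ξ' m) → v i ξ = v i ξ')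
    (hu : ∀ ξ, u ξ = ∑ i, v i ξ) (ξ : ∀ m, Γ m) :
    ∑ K ∈ (Finset.univ : Finset (Fin M)).powerset.filter (fun K => K.card ≤ ℓ),
      (∑ S ∈ K.powerset,
        ((-1 : ℤ) ^ (K.card - S.card)) •
          u (fun m => if m ∈ S then ξ m else c m)) = u ξ := by
  classical
  set sel : Finset (Fin M) → (∀ m, Γ m) := fun S m => if m ∈ S then ξ m else c m with hsel
  -- key statement for a single function of effective dimension ≤ ℓ
  have key : ∀ (w : (∀ m, Γ m) → V) (Jw : Finset (Fin M)), Jw.card ≤ ℓ →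
      (∀ ζ ζ' : ∀ m, Γ m, (∀ m ∈ Jw, ζ m = ζ' m) → w ζ = w ζ') →
      ∑ K ∈ (Finset.univ : Finset (Fin M)).powerset.filter (fun K => K.card ≤ ℓ),
        (∑ S ∈ K.powerset, ((-1 : ℤ) ^ (K.card - S.card)) • w (sel S)) = w ξ := by
    intro w Jw hcard hw
    -- rewrite the sign
    have hsign : ∀ K : Finset (Fin M),
        (∑ S ∈ K.powerset, ((-1 : ℤ) ^ (K.card - S.card)) • w (sel S)) =
        ∑ S ∈ K.powerset, ((-1 : ℤ) ^ (K.card + S.card)) • w (sel S) := by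
      intro K
      refine Finset.sum_congr rfl fun S hS => ?_
      rw [neg_one_pow_sub' (card_le_card (mem_powerset.1 hS))]
    -- vanishing for K not contained in Jw
    have hvanish : ∀ K : Finset (Fin M), ¬ K ⊆ Jw →
        (∑ S ∈ K.powerset, ((-1 : ℤ) ^ (K.card + S.card)) • w (sel S)) = 0 := by
      intro K hK
      obtain ⟨k, hkK, hkJ⟩ : ∃ k, k ∈ K ∧ k ∉ Jw := by
        by_contra h
        push_neg at h
        exact hK h
      refine Finset.sum_involution
        (fun S _ => if k ∈ S then S.erase k else insert k S) ?_ ?_ ?_ ?_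
      · intro S hS
        have hval : w (sel S) = w (sel (if k ∈ S then S.erase k else insert k S)) := by
          apply hw
          intro m hm
          have hmk : m ≠ k := fun h => hkJ (h ▸ hm)
          by_cases hkS : k ∈ S <;>
            simp [hsel, hkS, hmk, Finset.mem_erase, Finset.mem_insert]
        rw [← hval, ← add_smul]
        convert zero_smul ℤ (w (sel S))
        by_cases hkS : k ∈ S
        · have h1 : 1 ≤ S.card := card_pos.2 ⟨k, hkS⟩
          simp only [hkS, if_true, card_erase_of_mem hkS]
          have h2 : K.card + S.card = (K.card + (S.card - 1)) + 1 := by omega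
          rw [h2, pow_succ]
          ring
        · simp only [hkS, if_false, card_insert_of_notMem hkS]
          rw [← add_assoc, pow_succ]
          ring
      · intro S hS h
        by_cases hkS : k ∈ S
        · simp only [hkS, if_true]
          intro he
          have : k ∉ S := he ▸ Finset.notMem_erase k S
          exact this hkS
        · simp only [hkS, if_false]
          intro he
          exact hkS (he ▸ Finset.mem_insert_self k S)
      · intro S hS
        have hSK := mem_powerset.1 hS
        by_cases hkS : k ∈ S
        · simp only [hkS, if_true]
          exact mem_powerset.2 ((erase_subset k S).trans hSK)
        · simp only [hkS, if_false]
          exact mem_powerset.2 (insert_subset hkK hSK)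
      · intro S hS
        by_cases hkS : k ∈ S
        · simp [hkS, Finset.insert_erase hkS]
        · simp [hkS, Finset.erase_insert hkS]
    -- restrict the outer sum to subsets of Jw
    have hrestrict :
        ∑ K ∈ (Finset.univ : Finset (Fin M)).powerset.filter (fun K => K.card ≤ ℓ),
          (∑ S ∈ K.powerset, ((-1 : ℤ) ^ (K.card + S.card)) • w (sel S)) =
        ∑ K ∈ Jw.powerset,
          (∑ S ∈ K.powerset, ((-1 : ℤ) ^ (K.card + S.card)) • w (sel S)) := by
      refine (Finset.sum_subset ?_ ?_).symm
      · intro K hK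
        simp only [mem_filter, mem_powerset] at *
        exact ⟨subset_univ K, (card_le_card hK).trans hcard⟩
      · intro K _ hK
        exact hvanish K fun h => hK (mem_powerset.2 h)
    -- swap the two sums
    have hswap :
        ∑ K ∈ Jw.powerset, (∑ S ∈ K.powerset, ((-1 : ℤ) ^ (K.card + S.card)) • w (sel S)) =
        ∑ S ∈ Jw.powerset,
          (∑ K ∈ Jw.powerset.filter (fun K => S ⊆ K), ((-1 : ℤ) ^ (K.card + S.card))) •
            w (sel S) := by
      have h1 : ∀ K ∈ Jw.powerset,
          (∑ S ∈ K.powerset, ((-1 : ℤ) ^ (K.card + S.card)) • w (sel S)) =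
          ∑ S ∈ Jw.powerset,
            if S ⊆ K then ((-1 : ℤ) ^ (K.card + S.card)) • w (sel S) else 0 := by
        intro K hK
        rw [← Finset.sum_filter]
        apply Finset.sum_congr _ fun _ _ => rfl
        ext S
        simp only [mem_powerset, mem_filter]
        exact ⟨fun h => ⟨h.trans (mem_powerset.1 hK), h⟩, fun h => h.2⟩
      rw [Finset.sum_congr rfl h1, Finset.sum_comm]
      refine Finset.sum_congr rfl fun S hS => ?_
      rw [Finset.sum_smul, ← Finset.sum_filter]
    -- evaluate the coefficient
    have hcoeff : ∀ S ∈ Jw.powerset,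
        (∑ K ∈ Jw.powerset.filter (fun K => S ⊆ K), ((-1 : ℤ) ^ (K.card + S.card))) =
        if S = Jw then 1 else 0 := by
      intro S hS
      have hSJ := mem_powerset.1 hS
      have hb : ∑ K ∈ Jw.powerset.filter (fun K => S ⊆ K), ((-1 : ℤ) ^ (K.card + S.card)) =
          ∑ T ∈ (Jw \ S).powerset, ((-1 : ℤ) ^ ((S ∪ T).card + S.card)) := by
        refine Finset.sum_bij' (fun K _ => K \ S) (fun T _ => S ∪ T) ?_ ?_ ?_ ?_ ?_
        · intro K hK
          simp only [mem_filter, mem_powerset] at hK ⊢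
          exact sdiff_subset_sdiff hK.1 le_rfl
        · intro T hT
          simp only [mem_powerset] at hT
          simp only [mem_filter, mem_powerset]
          exact ⟨union_subset hSJ (hT.trans (sdiff_subset)), subset_union_left⟩
        · intro K hK
          simp only [mem_filter, mem_powerset] at hK
          exact union_sdiff_of_subset hK.2
        · intro T hT
          simp only [mem_powerset] at hT
          exact union_sdiff_cancel_left (disjoint_of_subset_right hT sdiff_disjoint.symm)
        · intro K hK
          simp only [mem_filter, mem_powerset] at hK
          rw [union_sdiff_of_subset hK.2]
      rw [hb]
      have hcard2 : ∀ T ∈ (Jw \ S).powerset, ((-1 : ℤ) ^ ((S ∪ T).card + S.card)) =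
          (-1 : ℤ) ^ T.card := by
        intro T hT
        have hdisj : Disjoint S T :=
          disjoint_of_subset_right (mem_powerset.1 hT) sdiff_disjoint.symm
        rw [card_union_of_disjoint hdisj]
        have : S.card + T.card + S.card = T.card + 2 * S.card := by ring
        rw [this, pow_add, pow_mul]
        simp
      rw [Finset.sum_congr rfl hcard2, Finset.sum_powerset_neg_one_pow_card]
      congr 1
      simp only [sdiff_eq_empty_iff_subset, eq_iff_iff]
      exact ⟨fun h => subset_antisymm hSJ h, fun h => by rw [h]⟩
    -- put it together
    rw [Finset.sum_congr rfl fun K _ => hsign K, hrestrict, hswap,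
      Finset.sum_congr rfl fun S hS => by rw [hcoeff S hS]]
    simp only [ite_smul, zero_smul, one_smul]
    rw [Finset.sum_ite_eq' Jw.powerset Jw (fun S => w (sel S))]
    rw [if_pos (mem_powerset.2 (subset_refl Jw))]
    apply hw
    intro m hm
    simp [hsel, hm]
  -- reduce to the key statement via linearity
  have hlin :
      ∑ K ∈ (Finset.univ : Finset (Fin M)).powerset.filter (fun K => K.card ≤ ℓ),
        (∑ S ∈ K.powerset, ((-1 : ℤ) ^ (K.card - S.card)) • u (sel S)) =
      ∑ i, ∑ K ∈ (Finset.univ : Finset (Fin M)).powerset.filter (fun K => K.card ≤ ℓ),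
        (∑ S ∈ K.powerset, ((-1 : ℤ) ^ (K.card - S.card)) • v i (sel S)) := by
    rw [Finset.sum_comm]
    refine Finset.sum_congr rfl fun K _ => ?_
    rw [Finset.sum_comm]
    refine Finset.sum_congr rfl fun S _ => ?_
    rw [hu (sel S), Finset.smul_sum]
  rw [hlin, hu ξ]
  exact Finset.sum_congr rfl fun i _ => key (v i) (J i) (hJ i) (hv i)
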